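/- The Levy collapse Coll(ω, <κ) has the κ-chain condition when κ is regular and inaccessible: every antichain has size less than κ. -/

import Mathlib

universe u

/-- A Levy collapse condition over the type `κ.ord.ToType` of ordinals below κ:
a finite partial function on `κ × ω` (coded as a functional finite set of pairs
`((α, n), β)`) with `p (α, n) = β < α`. -/
def IsLevyCond (κ : Cardinal.{u})
    (p : Finset ((κ.ord.ToType × ℕ) × κ.ord.ToType)) : Prop :=
  (∀ x ∈ p, ∀ y ∈ p,
    (x : (κ.ord.ToType × ℕ) × κ.ord.ToType).1 = y.1 → x = y) ∧
  (∀ x ∈ p, (x : (κ.ord.ToType × ℕ) × κ.ord.ToType).2 < x.1.1)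

/-- The Levy collapse `Coll(ω, <κ)`. -/
def LevyColl (κ : Cardinal.{u}) :=
  {p : Finset ((κ.ord.ToType × ℕ) × κ.ord.ToType) // IsLevyCond κ p}

/-- Ordered by reverse inclusion. -/
instance (κ : Cardinal.{u}) : PartialOrder (LevyColl κ) where
  le p q := q.1 ⊆ p.1
  le_refl p := Finset.Subset.refl _
  le_trans p q r h1 h2 := Finset.Subset.trans h2 h1
  le_antisymm p q h1 h2 := Subtype.ext (Finset.Subset.antisymm h2 h1)

open Cardinal Set Ordinal

/-- Finite sets have cardinality less than any infinite cardinal. -/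
lemma finset_mk_lt {κ : Cardinal.{u}} (hκ : ℵ₀ ≤ κ) {α : Type u} (s : Finset α) :
    #(s : Set α) < κ :=
  lt_of_lt_of_le s.finite_toSet.lt_aleph0 hκ

/-- Pigeonhole: a κ-sized family of finite sets has a κ-sized subfamily of constant size. -/
lemma exists_const_card {κ : Cardinal.{u}} (hreg : κ.IsRegular) (hℵ : ℵ₀ < κ)
    {ι α : Type u} [DecidableEq α] (F : ι → Finset α) (S : Set ι) (hS : κ ≤ #S) :
    ∃ n : ℕ, κ ≤ #{i ∈ S | (F i).card = n} := by
  by_contra h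
  push_neg at h
  have hU : S ⊆ ⋃ n : ULift.{u} ℕ, {i ∈ S | (F i).card = n.down} := by
    intro i hi
    exact mem_iUnion.2 ⟨⟨(F i).card⟩, hi, rfl⟩
  have hℕ : #(ULift.{u} ℕ) < κ := by
    rw [mk_uLift, mk_nat, lift_aleph0]; exact hℵ
  have := (card_iUnion_lt_iff_forall_of_isRegular hreg hℕ
    (t := fun n : ULift.{u} ℕ => {i ∈ S | (F i).card = n.down})).2
    (fun n => h n.down)
  exact absurd (hS.trans (mk_le_mk_of_subset hU)) (not_le.2 this)

/-- The Δ-system lemma for families of sets of constant finite size. -/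
lemma delta_aux {κ : Cardinal.{u}} (hreg : κ.IsRegular) (hℵ : ℵ₀ < κ) :
    ∀ (n : ℕ) {ι α : Type u} [DecidableEq α] (F : ι → Finset α) (S : Set ι),
      κ ≤ #S → (∀ i ∈ S, (F i).card = n) →
      ∃ T R, T ⊆ S ∧ κ ≤ #T ∧ T.Pairwise (fun i j => F i ∩ F j = R) := by
  intro n
  induction n with
  | zero =>
    intro ι α _inst F S hS hc
    refine ⟨S, ∅, subset_rfl, hS, fun i hi j hj _ => ?_⟩
    have h1 := Finset.card_eq_zero.1 (hc i hi)
    simp [h1]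
  | succ n ih =>
    intro ι α _inst F S hS hc
    by_cases hx : ∃ x, κ ≤ #{i ∈ S | x ∈ F i}
    · -- some element belongs to κ many sets: remove it, apply IH, add it back to the root
      obtain ⟨x, hx⟩ := hx
      obtain ⟨T, R, hTs, hT, hp⟩ := ih (fun i => (F i).erase x) {i ∈ S | x ∈ F i} hx
        (fun i hi => by rw [Finset.card_erase_of_mem hi.2, hc i hi.1]; rfl)
      refine ⟨T, insert x R, hTs.trans (sep_subset _ _), hT, fun i hi j hj hij => ?_⟩
      have hxi : x ∈ F i := (hTs hi).2
      have hxj : x ∈ F j := (hTs hj).2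
      have hR := hp hi hj hij
      ext y
      by_cases hy : y = x
      · subst hy; simp [hxi, hxj]
      · constructor
        · intro hmem
          rw [Finset.mem_inter] at hmem
          have : y ∈ (F i).erase x ∩ (F j).erase x := by
            simp [Finset.mem_erase, hy, hmem.1, hmem.2]
          rw [hR] at this
          simp [this]
        · intro hmem
          rw [Finset.mem_insert] at hmem
          rcases hmem with h | h
          · exact absurd h hy
          · have : y ∈ (F i).erase x ∩ (F j).erase x := by rw [hR]; exact h
            rw [Finset.mem_inter, Finset.mem_erase, Finset.mem_erase] at this
            exact Finset.mem_inter.2 ⟨this.1.2, this.2.2⟩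
    · -- every element belongs to < κ many sets: find κ many pairwise disjoint sets
      push_neg at hx
      have hsymm : Symmetric (fun i j : ι => F i ∩ F j = ∅) := by
        intro a b h; rw [Finset.inter_comm]; exact h
      have hzorn : ∀ c ⊆ {T : Set ι | T ⊆ S ∧ T.Pairwise fun i j => F i ∩ F j = ∅},
          IsChain (· ⊆ ·) c → ∃ ub ∈ {T : Set ι | T ⊆ S ∧
            T.Pairwise fun i j => F i ∩ F j = ∅}, ∀ s ∈ c, s ⊆ ub := by
        intro c hc hchain
        refine ⟨⋃₀ c, ⟨?_, ?_⟩, fun s hs => subset_sUnion_of_mem hs⟩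
        · exact sUnion_subset fun t ht => (hc ht).1
        · intro i hi j hj hij
          obtain ⟨t1, ht1, hi1⟩ := hi
          obtain ⟨t2, ht2, hj2⟩ := hj
          rcases hchain.total ht1 ht2 with h | h
          · exact (hc ht2).2 (h hi1) hj2 hij
          · exact (hc ht1).2 hi1 (h hj2) hij
      obtain ⟨M, hM⟩ := zorn_subset
        {T : Set ι | T ⊆ S ∧ T.Pairwise fun i j => F i ∩ F j = ∅} hzorn
      refine ⟨M, ∅, hM.1.1, ?_, hM.1.2⟩
      by_contra hMκ
      rw [not_le] at hMκ
      -- the set of indices "conflicting" with M is small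
      set B : Set ι := ⋃ i ∈ M, ⋃ x ∈ (F i : Set α), {j ∈ S | x ∈ F j} with hB
      have hBκ : #B < κ := by
        rw [hB]
        refine (card_biUnion_lt_iff_forall_of_isRegular hreg hMκ).2 (fun i _ => ?_)
        refine (card_biUnion_lt_iff_forall_of_isRegular hreg
          (finset_mk_lt hreg.1 (F i))).2 (fun x _ => hx x)
      have hnsub : ¬ S ⊆ B := fun h =>
        absurd (hS.trans (mk_le_mk_of_subset h)) (not_le.2 hBκ)
      obtain ⟨j, hjS, hjB⟩ := not_subset.1 hnsub
      have hMB : M ⊆ B := by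
        intro i hi
        have hcard : (F i).card = n + 1 := hc i (hM.1.1 hi)
        obtain ⟨x, hxi⟩ := Finset.card_pos.1 (by rw [hcard]; exact n.succ_pos)
        exact mem_iUnion₂.2 ⟨i, hi, mem_iUnion₂.2 ⟨x, hxi, hM.1.1 hi, hxi⟩⟩
      have hjM : j ∉ M := fun h => hjB (hMB h)
      have hdisj : ∀ i ∈ M, F i ∩ F j = ∅ := by
        intro i hi
        by_contra hne
        obtain ⟨y, hy⟩ := Finset.nonempty_iff_ne_empty.2 hne
        rw [Finset.mem_inter] at hy
        exact hjB (mem_iUnion₂.2 ⟨i, hi, mem_iUnion₂.2 ⟨y, hy.1, hjS, hy.2⟩⟩)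
      have hins : insert j M ∈
          {T : Set ι | T ⊆ S ∧ T.Pairwise fun i j => F i ∩ F j = ∅} := by
        refine ⟨insert_subset hjS hM.1.1, ?_⟩
        haveI : Std.Symm (fun i j : ι => F i ∩ F j = ∅) := ⟨fun a b h => hsymm h⟩; rw [pairwise_insert_of_symm]
        exact ⟨hM.1.2, fun i hi _ => hsymm (hdisj i hi)⟩
      have := hM.2 hins (subset_insert j M)
      exact hjM (this (mem_insert j M))

/-- The Δ-system lemma: any κ-sized family of finite sets (κ regular uncountable)
contains a κ-sized Δ-subsystem. -/
lemma delta_system {κ : Cardinal.{u}} (hreg : κ.IsRegular) (hℵ : ℵ₀ < κ)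
    {ι α : Type u} [DecidableEq α] (F : ι → Finset α) (S : Set ι) (hS : κ ≤ #S) :
    ∃ T R, T ⊆ S ∧ κ ≤ #T ∧ T.Pairwise (fun i j => F i ∩ F j = R) := by
  obtain ⟨n, hn⟩ := exists_const_card hreg hℵ F S hS
  obtain ⟨T, R, hTs, hT, hp⟩ := delta_aux hreg hℵ n F {i ∈ S | (F i).card = n} hn
    (fun i hi => hi.2)
  exact ⟨T, R, hTs.trans (sep_subset _ _), hT, hp⟩

/-- The Levy collapse `Coll(ω, <κ)` has the κ-chain condition for κ inaccessible:
every antichain (set of pairwise incompatible conditions) has size less than κ. -/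
theorem stmt14 (κ : Cardinal.{u}) (hκ : κ.IsInaccessible)
    (A : Set (LevyColl κ))
    (hA : ∀ p ∈ A, ∀ q ∈ A, p ≠ q → ¬ ∃ r : LevyColl κ, r ≤ p ∧ r ≤ q) :
    Cardinal.mk A < κ := by
  classical
  obtain ⟨hℵ, hreg, hsl⟩ := hκ
  have hreg : κ.IsRegular := ⟨hℵ.le, hreg⟩
  by_contra hlt
  rw [not_lt] at hlt
  set O := κ.ord.ToType
  -- domains of the conditions
  set F : ↥A → Finset (O × ℕ) := fun i => (i.1.1).image Prod.fst with hF
  obtain ⟨T, R, _, hT, hp⟩ := delta_system hreg hℵ F (univ : Set ↥A)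
    (by rwa [mk_univ])
  -- the possible restrictions to the root `R` form a set of size < κ
  set X : Set ((O × ℕ) × O) := {z | z.1 ∈ R ∧ z.2 < z.1.1} with hX
  have hXκ : #X < κ := by
    have hsub : X ⊆ ⋃ k ∈ (R : Set (O × ℕ)), (fun β => (k, β)) '' {β : O | β < k.1} := by
      rintro ⟨k, β⟩ ⟨h1, h2⟩
      exact mem_iUnion₂.2 ⟨k, h1, β, h2, rfl⟩
    refine lt_of_le_of_lt (mk_le_mk_of_subset hsub) ?_
    refine (card_biUnion_lt_iff_forall_of_isRegular hreg (finset_mk_lt hreg.1 R)).2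
      (fun k _ => lt_of_le_of_lt (mk_image_le) ?_)
    exact mk_Iio_ord_toType k.1
  set Y : Set (Finset ((O × ℕ) × O)) := {q | ∀ z ∈ q, z.1 ∈ R ∧ z.2 < z.1.1} with hY
  have hYκ : #Y < κ := by
    have hinj : Function.Injective (fun q : ↥Y => {z : ↥X | (z : (O × ℕ) × O) ∈ q.1}) := by
      rintro ⟨q1, hq1⟩ ⟨q2, hq2⟩ h
      replace h : {z : ↥X | (z : (O × ℕ) × O) ∈ q1} = {z : ↥X | (z : (O × ℕ) × O) ∈ q2} := h
      simp only [Subtype.mk.injEq]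
      ext z
      constructor
      · intro hz
        have hzX : z ∈ X := hq1 z hz
        have : (⟨z, hzX⟩ : ↥X) ∈ {z : ↥X | (z : (O × ℕ) × O) ∈ q1} := hz
        rw [h] at this
        exact this
      · intro hz
        have hzX : z ∈ X := hq2 z hz
        have : (⟨z, hzX⟩ : ↥X) ∈ {z : ↥X | (z : (O × ℕ) × O) ∈ q2} := hz
        rw [← h] at this
        exact this
    calc #Y ≤ #(Set ↥X) := mk_le_of_injective hinj
    _ = 2 ^ #X := mk_set
    _ < κ := hsl hXκ
  -- the restriction map to the root
  set g : ↥T → Finset ((O × ℕ) × O) := fun i => (i.1.1.1).filter (fun z => z.1 ∈ R) with hg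
  have hgY : ∀ i : ↥T, g i ∈ Y := by
    intro i z hz
    rw [hg, Finset.mem_filter] at hz
    exact ⟨hz.2, i.1.1.2.2 z hz.1⟩
  have hginj : ¬ Function.Injective (fun i : ↥T => (⟨g i, hgY i⟩ : ↥Y)) := by
    intro h
    exact absurd (hT.trans (mk_le_of_injective h)) (not_le.2 hYκ)
  rw [Function.not_injective_iff] at hginj
  obtain ⟨i, j, hgij, hij⟩ := hginj
  rw [Subtype.mk.injEq] at hgij
  -- the two conditions with equal restrictions are compatible
  have hij' : (i.1 : ↥A) ≠ j.1 := fun h => hij (Subtype.ext h)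
  have hpq : (i.1.1 : LevyColl κ) ≠ j.1.1 := fun h => hij' (Subtype.ext h)
  have hroot : F i.1 ∩ F j.1 = R := hp i.2 j.2 hij'
  set p : LevyColl κ := i.1.1 with hpdef
  set q : LevyColl κ := j.1.1 with hqdef
  -- mixed functionality
  have key : ∀ x ∈ p.1, ∀ y ∈ q.1, x.1 = y.1 → x = y := by
    intro x hx y hy hxy
    have hxR : x.1 ∈ R := by
      rw [← hroot, Finset.mem_inter]
      constructor
      · exact Finset.mem_image_of_mem Prod.fst hx
      · rw [hxy]; exact Finset.mem_image_of_mem Prod.fst hy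
    have hxg : x ∈ g i := by rw [hg, Finset.mem_filter]; exact ⟨hx, hxR⟩
    rw [hgij] at hxg
    rw [hg, Finset.mem_filter] at hxg
    exact q.2.1 x hxg.1 y hy hxy
  have hcond : IsLevyCond κ (p.1 ∪ q.1) := by
    constructor
    · intro x hx y hy hxy
      rw [Finset.mem_union] at hx hy
      rcases hx with hx | hx <;> rcases hy with hy | hy
      · exact p.2.1 x hx y hy hxy
      · exact key x hx y hy hxy
      · exact (key y hy x hx hxy.symm).symm
      · exact q.2.1 x hx y hy hxy
    · intro x hx
      rw [Finset.mem_union] at hx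
      rcases hx with hx | hx
      · exact p.2.2 x hx
      · exact q.2.2 x hx
  exact hA p i.1.2 q j.1.2 hpq ⟨⟨p.1 ∪ q.1, hcond⟩,
    Finset.subset_union_left, Finset.subset_union_right⟩
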